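/- The subsemiring ℝ₊[x]_{(Σ)} of the homogeneous localization ℝ[x₁,…,xₙ]_{(Σ)} generated by the nonnegative reals and the fractions x₁/Σ, …, xₙ/Σ is archimedean, i.e. ℝ₊[x]_{(Σ)} + ℤ = ℝ[x]_{(Σ)}. -/

import Mathlib

open MvPolynomial

noncomputable section

/-- The field of rational functions in `n` variables over `ℝ`. -/
abbrev RatField (n : ℕ) := FractionRing (MvPolynomial (Fin n) ℝ)

/-- Inclusion of polynomials into the field of rational functions. -/
noncomputable def ι (n : ℕ) : MvPolynomial (Fin n) ℝ →+* RatField n :=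
  algebraMap (MvPolynomial (Fin n) ℝ) (RatField n)

/-- The linear form `Σ = x₁ + ⋯ + xₙ`. -/
noncomputable def sigma (n : ℕ) : MvPolynomial (Fin n) ℝ := ∑ i, X i

/-- The subsemiring `ℝ₊[x]_{(Σ)}` of `ℝ[x]_{(Σ)}` generated by the nonnegative reals and
the fractions `x₁/Σ, …, xₙ/Σ`. -/
noncomputable def posLoc (n : ℕ) : Subsemiring (RatField n) :=
  Subsemiring.closure
    ({a | ∃ c : ℝ, 0 ≤ c ∧ a = ι n (C c)} ∪ {a | ∃ i : Fin n, a = ι n (X i) / ι n (sigma n)})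

lemma const_mem {n : ℕ} {c : ℝ} (hc : 0 ≤ c) : ι n (C c) ∈ posLoc n :=
  Subsemiring.subset_closure (Or.inl ⟨c, hc, rfl⟩)

lemma t_mem {n : ℕ} (i : Fin n) : ι n (X i) / ι n (sigma n) ∈ posLoc n :=
  Subsemiring.subset_closure (Or.inr ⟨i, rfl⟩)

lemma sigma_ne {n : ℕ} (hn : 0 < n) : ι n (sigma n) ≠ 0 := by
  intro h
  have h0 : sigma n = 0 := IsFractionRing.injective (MvPolynomial (Fin n) ℝ) (RatField n)
    (by simpa [ι] using h)
  have := congrArg (eval fun _ => (1 : ℝ)) h0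
  simp [sigma, eval_sum] at this
  omega

lemma sum_t {n : ℕ} (hn : 0 < n) : ∑ i, ι n (X i) / ι n (sigma n) = 1 := by
  rw [← Finset.sum_div, ← map_sum, ← sigma, div_self (sigma_ne hn)]

lemma one_sub_t_mem {n : ℕ} (hn : 0 < n) (i : Fin n) :
    1 - ι n (X i) / ι n (sigma n) ∈ posLoc n := by
  have h : 1 - ι n (X i) / ι n (sigma n)
      = ∑ j ∈ Finset.univ.erase i, ι n (X j) / ι n (sigma n) := by
    rw [← sum_t hn, ← Finset.add_sum_erase _ _ (Finset.mem_univ i)]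
    ring
  rw [h]
  exact Subsemiring.sum_mem _ fun j _ => t_mem j

lemma mul_pair {n : ℕ} {x y : RatField n} (hx : x ∈ posLoc n) (hx1 : 1 - x ∈ posLoc n)
    (hy : y ∈ posLoc n) (hy1 : 1 - y ∈ posLoc n) :
    x * y ∈ posLoc n ∧ 1 - x * y ∈ posLoc n := by
  refine ⟨mul_mem hx hy, ?_⟩
  have : 1 - x * y = (1 - x) + x * (1 - y) := by ring
  rw [this]
  exact add_mem hx1 (mul_mem hx hy1)

lemma pow_pair {n : ℕ} {x : RatField n} (hx : x ∈ posLoc n) (hx1 : 1 - x ∈ posLoc n) (b : ℕ) :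
    x ^ b ∈ posLoc n ∧ 1 - x ^ b ∈ posLoc n := by
  induction b with
  | zero => simpa using ⟨one_mem _, zero_mem _⟩
  | succ b ih =>
      rw [pow_succ]
      exact mul_pair ih.1 ih.2 hx hx1

lemma mono_pair {n : ℕ} (hn : 0 < n) (α : Fin n →₀ ℕ) :
    (∏ i, (ι n (X i) / ι n (sigma n)) ^ α i) ∈ posLoc n ∧
    1 - (∏ i, (ι n (X i) / ι n (sigma n)) ^ α i) ∈ posLoc n := by
  induction α using Finsupp.induction with
  | zero => simpa using ⟨one_mem _, zero_mem _⟩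
  | single_add a b f ha hb ih =>
      have heq : (∏ i, (ι n (X i) / ι n (sigma n)) ^ (Finsupp.single a b + f) i)
          = (ι n (X a) / ι n (sigma n)) ^ b * ∏ i, (ι n (X i) / ι n (sigma n)) ^ f i := by
        simp only [Finsupp.add_apply, pow_add, Finset.prod_mul_distrib]
        congr 1
        refine (Finset.prod_eq_single a ?_ ?_).trans (by rw [Finsupp.single_eq_same])
        · intro i _ h
          rw [Finsupp.single_eq_of_ne h, pow_zero]
        · intro h
          exact absurd (Finset.mem_univ a) h
      rw [heq]
      have hp := pow_pair (t_mem a) (one_sub_t_mem hn a) b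
      exact ⟨mul_mem hp.1 ih.1, (mul_pair hp.1 hp.2 ih.1 ih.2).2⟩

lemma term_arch {n : ℕ} (c : ℝ) {x : RatField n} (hx : x ∈ posLoc n)
    (hx1 : 1 - x ∈ posLoc n) : ∃ k : ℤ, (k : RatField n) + ι n (C c) * x ∈ posLoc n := by
  refine ⟨(⌈-c⌉₊ : ℕ), ?_⟩
  set k : ℕ := ⌈-c⌉₊
  have hkc : 0 ≤ (k : ℝ) + c := by
    have := Nat.le_ceil (-c)
    linarith
  have hcast : ((k : ℤ) : RatField n) = ι n (C (k : ℝ)) := by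
    push_cast
    rw [map_natCast (C : ℝ →+* MvPolynomial (Fin n) ℝ), map_natCast (ι n)]
  have heq : ((k : ℤ) : RatField n) + ι n (C c) * x
      = ι n (C ((k : ℝ) + c)) * x + ι n (C (k : ℝ)) * (1 - x) := by
    rw [hcast, map_add, map_add]
    ring
  rw [heq]
  exact add_mem (mul_mem (const_mem hkc) hx) (mul_mem (const_mem (by positivity)) hx1)

lemma mono_div {n : ℕ} (hn : 0 < n) (α : Fin n →₀ ℕ) (d : ℕ) (hd : ∑ i, α i = d) :
    ι n (monomial α 1) / (ι n (sigma n)) ^ d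
      = ∏ i, (ι n (X i) / ι n (sigma n)) ^ α i := by
  have h1 : (monomial α (1:ℝ)) = ∏ i, X i ^ α i := by
    rw [← prod_X_pow_eq_monomial]
    apply Finset.prod_subset (Finset.subset_univ _)
    intro i _ h
    rw [Finsupp.notMem_support_iff.mp h, pow_zero]
  rw [h1, map_prod]
  simp only [map_pow]
  rw [← hd, ← Finset.prod_pow_eq_pow_sum, ← Finset.prod_div_distrib]
  exact Finset.prod_congr rfl fun i _ => (div_pow _ _ _).symm

/-- `ℝ₊[x]_{(Σ)}` is an archimedean subsemiring of the homogeneous localization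
`ℝ[x]_{(Σ)} = { f/Σ^d : f a form of degree d }`: `ℝ₊[x]_{(Σ)} + ℤ = ℝ[x]_{(Σ)}`. -/
theorem posLoc_archimedean {n : ℕ} (hn : 0 < n) (a : RatField n)
    (ha : ∃ (d : ℕ) (f : MvPolynomial (Fin n) ℝ), f.IsHomogeneous d ∧
      a = ι n f / (ι n (sigma n)) ^ d) :
    ∃ k : ℤ, (k : RatField n) + a ∈ posLoc n := by
  obtain ⟨d, f, hf, rfl⟩ := ha
  have key : ι n f / (ι n (sigma n)) ^ d
      = ∑ α ∈ f.support, ι n (C (coeff α f)) * ∏ i, (ι n (X i) / ι n (sigma n)) ^ α i := by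
    conv_lhs => rw [f.as_sum]
    rw [map_sum, Finset.sum_div]
    apply Finset.sum_congr rfl
    intro α hα
    have hdeg : ∑ i, α i = d := by
      have h2 := hf (mem_support_iff.mp hα)
      rw [show (Finsupp.weight 1 : (Fin n →₀ ℕ) →+ ℕ) = Finsupp.weight (fun _ => 1) from rfl, ← Finsupp.degree_eq_weight_one] at h2
      rw [← h2, Finsupp.degree]
      exact (Finset.sum_subset (Finset.subset_univ _)
        (fun i _ h => Finsupp.notMem_support_iff.mp h)).symm
    rw [← mono_div hn α d hdeg]
    rw [show monomial α (coeff α f) = C (coeff α f) * monomial α 1 by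
      rw [C_mul_monomial, mul_one], map_mul]
    ring
  rw [key]
  clear key hf
  induction f.support using Finset.induction with
  | empty => exact ⟨0, by simpa using zero_mem _⟩
  | @insert β s hni ih =>
      obtain ⟨k₁, hk₁⟩ := ih
      obtain ⟨k₂, hk₂⟩ := term_arch (coeff β f) (mono_pair hn β).1 (mono_pair hn β).2
      refine ⟨k₂ + k₁, ?_⟩
      rw [Finset.sum_insert hni]
      push_cast
      have : ((k₂ : RatField n) + k₁) + (ι n (C (coeff β f)) * ∏ i, (ι n (X i) / ι n (sigma n)) ^ β i
          + ∑ α ∈ s, ι n (C (coeff α f)) * ∏ i, (ι n (X i) / ι n (sigma n)) ^ α i)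
          = ((k₂ : RatField n) + ι n (C (coeff β f)) * ∏ i, (ι n (X i) / ι n (sigma n)) ^ β i)
          + ((k₁ : RatField n) + ∑ α ∈ s, ι n (C (coeff α f)) * ∏ i, (ι n (X i) / ι n (sigma n)) ^ α i) := by ring
      rw [this]
      exact add_mem hk₂ hk₁

end
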